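/- Let $D \in \mathbb{C}^{n\times n}$, let $\Gamma_5 \in \mathbb{C}^{n\times n}$ be Hermitian with $\Gamma_5^2 = I$, and set $Q := \Gamma_5 D$. Let $P \in \mathbb{C}^{n\times m}$ and let $\Gamma_5^c \in \mathbb{C}^{m\times m}$ be Hermitian with $(\Gamma_5^c)^2 = I_m$ and $\Gamma_5 P = P\Gamma_5^c$. Define $D_c := P^H D P$ and $Q_c := \Gamma_5^c D_c$, and assume $D_c$ is invertible. Then $Q_c = P^H Q P$, $Q_c$ is invertible, and the coarse grid error propagators coincide: $I - P Q_c^{-1} P^H Q = I - P D_c^{-1} P^H D$. -/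

import Mathlib

open Matrix

theorem coarse_grid_correction_equal
    {n m : ℕ} (D Γ₅ : Matrix (Fin n) (Fin n) ℂ)
    (hH : Γ₅ᴴ = Γ₅) (hU : Γ₅ * Γ₅ = 1)
    (P : Matrix (Fin n) (Fin m) ℂ) (Γ₅c : Matrix (Fin m) (Fin m) ℂ)
    (hHc : Γ₅cᴴ = Γ₅c) (hUc : Γ₅c * Γ₅c = 1)
    (hspin : Γ₅ * P = P * Γ₅c)
    (hDc : IsUnit (Pᴴ * D * P)) :
    Γ₅c * (Pᴴ * D * P) = Pᴴ * (Γ₅ * D) * P ∧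
    IsUnit (Γ₅c * (Pᴴ * D * P)) ∧
    (1 : Matrix (Fin n) (Fin n) ℂ) - P * (Γ₅c * (Pᴴ * D * P))⁻¹ * Pᴴ * (Γ₅ * D)
      = 1 - P * (Pᴴ * D * P)⁻¹ * Pᴴ * D := by
  have hint : Γ₅c * Pᴴ = Pᴴ * Γ₅ := by
    have := congrArg conjTranspose hspin
    simpa [conjTranspose_mul, hH, hHc] using this.symm
  have hQc : Γ₅c * (Pᴴ * D * P) = Pᴴ * (Γ₅ * D) * P := by
    calc Γ₅c * (Pᴴ * D * P) = (Γ₅c * Pᴴ) * D * P := by simp only [Matrix.mul_assoc]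
      _ = (Pᴴ * Γ₅) * D * P := by rw [hint]
      _ = Pᴴ * (Γ₅ * D) * P := by simp only [Matrix.mul_assoc]
  have hUcunit : IsUnit Γ₅c := (Matrix.isUnit_iff_isUnit_det _).mpr (IsUnit.of_mul_eq_one _ (by rw [← Matrix.det_mul, hUc, Matrix.det_one]))
  have hQcu : IsUnit (Γ₅c * (Pᴴ * D * P)) := hUcunit.mul hDc
  refine ⟨hQc, hQcu, ?_⟩
  have hinv : (Γ₅c * (Pᴴ * D * P))⁻¹ = (Pᴴ * D * P)⁻¹ * Γ₅c := by
    rw [Matrix.mul_inv_rev]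
    congr 1
    rw [Matrix.inv_eq_right_inv hUc]
  rw [hinv]
  congr 1
  calc P * ((Pᴴ * D * P)⁻¹ * Γ₅c) * Pᴴ * (Γ₅ * D)
      = P * (Pᴴ * D * P)⁻¹ * (Γ₅c * Pᴴ) * (Γ₅ * D) := by simp only [Matrix.mul_assoc]
    _ = P * (Pᴴ * D * P)⁻¹ * (Pᴴ * Γ₅) * (Γ₅ * D) := by rw [hint]
    _ = P * (Pᴴ * D * P)⁻¹ * Pᴴ * ((Γ₅ * Γ₅) * D) := by simp only [Matrix.mul_assoc]
    _ = P * (Pᴴ * D * P)⁻¹ * Pᴴ * D := by rw [hU, Matrix.one_mul]
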